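/- Let τ: A → 𝔄 be an 𝔄-trace with 𝔄 unital, and let J be the canonical conjugation on L²(A,τ) (J(â) = (a*)^, extended by continuity). Then (iii) J t 1̂ = t* 1̂ for every t ∈ π_τ(A)', where 1̂ = lim êᵢ ∈ L²(A,τ); and (iv) π_τ(A)'' = π_τ^op(A^op)' and π_τ(A)' = π_τ^op(A^op)'' in B(L²(A,τ)). -/

import Mathlib

open Filter Topology

noncomputable section

/-- A positive element of a `*`-ring: one of the form `star b * b`. -/
def IsPosElem {R : Type} [Mul R] [Star R] (x : R) : Prop := ∃ b : R, x = star b * b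

/-- Positivity for an `n × n` matrix over a `*`-ring, phrased entrywise:
`M = star b * b` for some rectangular matrix `b`. -/
def MatPos {R : Type} [AddCommMonoid R] [Mul R] [Star R] {n : ℕ}
    (M : Fin n → Fin n → R) : Prop :=
  ∃ (m : ℕ) (b : Fin m → Fin n → R), ∀ i j, M i j = ∑ k, star (b k i) * b k j

/-- A map between `*`-rings is completely positive if all its amplifications map
positive matrices to positive matrices. -/
def IsCPMap {R Z : Type} [AddCommMonoid R] [Mul R] [Star R]
    [AddCommMonoid Z] [Mul Z] [Star Z] (φ : R → Z) : Prop :=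
  ∀ (n : ℕ) (M : Fin n → Fin n → R), MatPos M → MatPos (fun i j => φ (M i j))

variable (𝔄 A : Type) [NonUnitalCStarAlgebra 𝔄] [NonUnitalCStarAlgebra A]

/-- A compatible right Banach `𝔄`-module structure on the C*-algebra `A`,
making `A` an `𝔄`-C*-module. -/
structure CStarAction where
  act : A → 𝔄 → A
  act_add : ∀ (a : A) (α β : 𝔄), act a (α + β) = act a α + act a β
  add_act : ∀ (a b : A) (α : 𝔄), act (a + b) α = act a α + act b α
  act_smulC : ∀ (c : ℂ) (a : A) (α : 𝔄), act a (c • α) = c • act a α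
  smulC_act : ∀ (c : ℂ) (a : A) (α : 𝔄), act (c • a) α = c • act a α
  norm_act : ∀ (a : A) (α : 𝔄), ‖act a α‖ ≤ ‖a‖ * ‖α‖
  mul_act : ∀ (a b : A) (α : 𝔄), act (a * b) α = a * act b α
  act_mul : ∀ (a : A) (α β : 𝔄), act a (α * β) = act (act a α) β
  star_compat : ∀ (a : A) (α β : 𝔄),
    act (star (act (star a) (star α))) β = star (act (star (act a β)) (star α))

variable {𝔄 A}

/-- The associated left action `α • a := (a* • α*)*`. -/
def CStarAction.lact (S : CStarAction 𝔄 A) (α : 𝔄) (a : A) : A :=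
  star (S.act (star a) (star α))

/-- The action is non degenerate if `a • α = 0` for all `a` forces `α = 0`. -/
def CStarAction.NonDegenerate (S : CStarAction 𝔄 A) : Prop :=
  ∀ α : 𝔄, (∀ a : A, S.act a α = 0) → α = 0

/-- The two-sided action is a biaction: `(a • α) b = a (α • b)`. -/
def CStarAction.Biaction (S : CStarAction 𝔄 A) : Prop :=
  ∀ (a : A) (α : 𝔄) (b : A), S.act a α * b = a * S.lact α b

/-- An `𝔄`-retraction: a positive right `𝔄`-module map `τ : A → 𝔄` with strictly dense
image such that `τ` sends some bounded approximate identity of `A` strictly to a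
projection `p` of `𝔄`.  (Nets are encoded by filters.) -/
structure IsRetraction (S : CStarAction 𝔄 A) (τ : A → 𝔄) : Prop where
  map_add : ∀ a b : A, τ (a + b) = τ a + τ b
  map_smulC : ∀ (c : ℂ) (a : A), τ (c • a) = c • τ a
  pos : ∀ a : A, IsPosElem (τ (star a * a))
  map_act : ∀ (a : A) (α : 𝔄), τ (S.act a α) = τ a * α
  strict_dense : ∀ (β : 𝔄) (ε : ℝ), 0 < ε → ∀ s : Finset 𝔄,
    ∃ a : A, ∀ α ∈ s, ‖τ (S.act a α) - β * α‖ < ε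
  bai : ∃ (l : Filter A) (p : 𝔄), l.NeBot ∧ (∃ C : ℝ, ∀ᶠ e in l, ‖e‖ ≤ C) ∧
    (∀ a : A, Tendsto (fun e => e * a) l (𝓝 a)) ∧
    (∀ a : A, Tendsto (fun e => a * e) l (𝓝 a)) ∧
    star p = p ∧ p * p = p ∧
    (∀ α : 𝔄, Tendsto (fun e => τ e * α) l (𝓝 (p * α))) ∧
    (∀ α : 𝔄, Tendsto (fun e => α * τ e) l (𝓝 (α * p)))

/-- An `𝔄`-trace: a tracial `𝔄`-retraction. -/
structure IsATrace (S : CStarAction 𝔄 A) (τ : A → 𝔄) extends IsRetraction S τ : Prop where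
  tracial : ∀ a b : A, τ (a * b) = τ (b * a)

/-! ### Hilbert C*-modules, adjointable operators, correspondences -/

variable (𝔄 : Type) [NonUnitalCStarAlgebra 𝔄]

/-- A (right) Hilbert `𝔄`-module structure on a complete normed space `X`. -/
structure HilbertModuleStr (X : Type) [NormedAddCommGroup X] [NormedSpace ℂ X]
    [CompleteSpace X] where
  smul : X → 𝔄 → X
  add_smul : ∀ (x y : X) (α : 𝔄), smul (x + y) α = smul x α + smul y α
  smul_add : ∀ (x : X) (α β : 𝔄), smul x (α + β) = smul x α + smul x β
  smulC_smul : ∀ (c : ℂ) (x : X) (α : 𝔄), smul (c • x) α = c • smul x α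
  smul_smulC : ∀ (c : ℂ) (x : X) (α : 𝔄), smul x (c • α) = c • smul x α
  smul_mul : ∀ (x : X) (α β : 𝔄), smul x (α * β) = smul (smul x α) β
  inner : X → X → 𝔄
  inner_add_left : ∀ x y z : X, inner (x + y) z = inner x z + inner y z
  inner_add_right : ∀ x y z : X, inner x (y + z) = inner x y + inner x z
  inner_smulC_right : ∀ (c : ℂ) (x y : X), inner x (c • y) = c • inner x y
  inner_smulC_left : ∀ (c : ℂ) (x y : X), inner (c • x) y = (starRingEnd ℂ c) • inner x y
  inner_smul_right : ∀ (x y : X) (α : 𝔄), inner x (smul y α) = inner x y * α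
  inner_star : ∀ x y : X, star (inner x y) = inner y x
  inner_pos : ∀ x : X, IsPosElem (inner x x)
  norm_inner : ∀ x : X, ‖x‖ ^ 2 = ‖inner x x‖

variable {𝔄}
variable {X : Type} [NormedAddCommGroup X] [NormedSpace ℂ X] [CompleteSpace X]

namespace HilbertModuleStr

variable (H : HilbertModuleStr 𝔄 X)

theorem inner_smul_left (x y : X) (α : 𝔄) :
    H.inner (H.smul x α) y = star α * H.inner x y := by
  rw [← H.inner_star, H.inner_smul_right, star_mul, H.inner_star]

theorem inner_zero_left (y : X) : H.inner 0 y = 0 := by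
  have h := H.inner_add_left 0 0 y
  rw [add_zero] at h
  exact left_eq_add.mp h

theorem inner_zero_right (x : X) : H.inner x 0 = 0 := by
  rw [← H.inner_star, H.inner_zero_left, star_zero]

theorem inner_neg_left (x y : X) : H.inner (-x) y = -H.inner x y := by
  have : (-x : X) = ((-1 : ℂ) • x) := by simp
  rw [this, H.inner_smulC_left]; simp

theorem inner_neg_right (x y : X) : H.inner x (-y) = -H.inner x y := by
  have : (-y : X) = ((-1 : ℂ) • y) := by simp
  rw [this, H.inner_smulC_right]; simp

theorem inner_sub_left (x y z : X) : H.inner (x - y) z = H.inner x z - H.inner y z := by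
  rw [sub_eq_add_neg, H.inner_add_left, H.inner_neg_left, sub_eq_add_neg]

theorem inner_sub_right (x y z : X) : H.inner x (y - z) = H.inner x y - H.inner x z := by
  rw [sub_eq_add_neg, H.inner_add_right, H.inner_neg_right, sub_eq_add_neg]

end HilbertModuleStr

/-- A bounded adjointable operator on a Hilbert `𝔄`-module. -/
structure Adj (H : HilbertModuleStr 𝔄 X) where
  toFun : X → X
  adjFun : X → X
  inner_adj : ∀ x y : X, H.inner (toFun x) y = H.inner x (adjFun y)

namespace Adj

variable {H : HilbertModuleStr 𝔄 X}

theorem ext' {S T : Adj H} (h1 : S.toFun = T.toFun) (h2 : S.adjFun = T.adjFun) : S = T := by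
  cases S; cases T; simp_all

instance : Add (Adj H) :=
  ⟨fun S T =>
    { toFun := fun x => S.toFun x + T.toFun x
      adjFun := fun x => S.adjFun x + T.adjFun x
      inner_adj := fun x y => by
        rw [H.inner_add_left, H.inner_add_right, S.inner_adj, T.inner_adj] }⟩

instance : Zero (Adj H) :=
  ⟨{ toFun := fun _ => 0
     adjFun := fun _ => 0
     inner_adj := fun x y => by rw [H.inner_zero_left, H.inner_zero_right] }⟩

instance : Neg (Adj H) :=
  ⟨fun S =>
    { toFun := fun x => -S.toFun x
      adjFun := fun x => -S.adjFun x
      inner_adj := fun x y => by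
        rw [H.inner_neg_left, H.inner_neg_right, S.inner_adj] }⟩

instance : Sub (Adj H) :=
  ⟨fun S T =>
    { toFun := fun x => S.toFun x - T.toFun x
      adjFun := fun x => S.adjFun x - T.adjFun x
      inner_adj := fun x y => by
        rw [H.inner_sub_left, H.inner_sub_right, S.inner_adj, T.inner_adj] }⟩

instance : SMul ℂ (Adj H) :=
  ⟨fun c S =>
    { toFun := fun x => c • S.toFun x
      adjFun := fun x => (starRingEnd ℂ c) • S.adjFun x
      inner_adj := fun x y => by
        rw [H.inner_smulC_left, H.inner_smulC_right, S.inner_adj] }⟩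

instance : Mul (Adj H) :=
  ⟨fun S T =>
    { toFun := fun x => S.toFun (T.toFun x)
      adjFun := fun x => T.adjFun (S.adjFun x)
      inner_adj := fun x y => by rw [S.inner_adj, T.inner_adj] }⟩

instance : One (Adj H) :=
  ⟨{ toFun := id
     adjFun := id
     inner_adj := fun _ _ => rfl }⟩

instance : Star (Adj H) :=
  ⟨fun S =>
    { toFun := S.adjFun
      adjFun := S.toFun
      inner_adj := fun x y =>
        calc H.inner (S.adjFun x) y = star (H.inner y (S.adjFun x)) := (H.inner_star _ _).symm
          _ = star (H.inner (S.toFun y) x) := by rw [S.inner_adj]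
          _ = H.inner x (S.toFun y) := H.inner_star _ _ }⟩

@[simp] theorem add_toFun (S T : Adj H) (x : X) : (S + T).toFun x = S.toFun x + T.toFun x := rfl
@[simp] theorem add_adjFun (S T : Adj H) (x : X) :
    (S + T).adjFun x = S.adjFun x + T.adjFun x := rfl
@[simp] theorem zero_toFun (x : X) : (0 : Adj H).toFun x = 0 := rfl
@[simp] theorem zero_adjFun (x : X) : (0 : Adj H).adjFun x = 0 := rfl

instance : AddCommMonoid (Adj H) where
  add_assoc S T U := ext' (funext fun x => add_assoc _ _ _) (funext fun x => add_assoc _ _ _)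
  zero_add S := ext' (funext fun x => zero_add _) (funext fun x => zero_add _)
  add_zero S := ext' (funext fun x => add_zero _) (funext fun x => add_zero _)
  add_comm S T := ext' (funext fun x => add_comm _ _) (funext fun x => add_comm _ _)
  nsmul := nsmulRec

/-- The operator norm of a (automatically bounded) adjointable operator. -/
noncomputable instance : Norm (Adj H) := ⟨fun T => ⨆ x : X, ‖T.toFun x‖ / ‖x‖⟩

end Adj

/-- The commutant of a set of adjointable operators. -/
def Commutant {H : HilbertModuleStr 𝔄 X} (Ω : Set (Adj H)) : Set (Adj H) :=
  {T | ∀ U ∈ Ω, T * U = U * T}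

/-! ### Correspondences, representations, c.c.p. module maps -/

variable (𝔄) in
/-- An `𝔄`-correspondence: a right Hilbert `𝔄`-module together with a left action of `𝔄`
by adjointable operators. -/
structure CorrStr (X : Type) [NormedAddCommGroup X] [NormedSpace ℂ X] [CompleteSpace X]
    extends HilbertModuleStr 𝔄 X where
  lsmul : 𝔄 → X → X
  lsmul_adj : ∀ (α : 𝔄) (x y : X),
    toHilbertModuleStr.inner (lsmul α x) y = toHilbertModuleStr.inner x (lsmul (star α) y)
  add_lsmul : ∀ (α β : 𝔄) (x : X), lsmul (α + β) x = lsmul α x + lsmul β x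
  smulC_lsmul : ∀ (c : ℂ) (α : 𝔄) (x : X), lsmul (c • α) x = c • lsmul α x
  mul_lsmul : ∀ (α β : 𝔄) (x : X), lsmul (α * β) x = lsmul α (lsmul β x)

namespace CorrStr

variable {X : Type} [NormedAddCommGroup X] [NormedSpace ℂ X] [CompleteSpace X]
variable (C : CorrStr 𝔄 X)

/-- The left action of `α ∈ 𝔄` as an adjointable operator. -/
def lactAdj (α : 𝔄) : Adj C.toHilbertModuleStr :=
  { toFun := C.lsmul α
    adjFun := C.lsmul (star α)
    inner_adj := fun x y => C.lsmul_adj α x y }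

/-- The canonical right `𝔄`-module structure on the adjointable operators of a
correspondence: `(T • α) x = T (α • x)`. -/
def ract (T : Adj C.toHilbertModuleStr) (α : 𝔄) : Adj C.toHilbertModuleStr :=
  T * C.lactAdj α

end CorrStr

variable (𝔄) in
/-- A representation of the `𝔄`-C*-module `A` in an `𝔄`-correspondence: a `*`-homomorphism
into the adjointable operators which is also a right `𝔄`-module map. -/
structure RepC {A : Type} [NonUnitalCStarAlgebra A] (S : CStarAction 𝔄 A)
    {X : Type} [NormedAddCommGroup X] [NormedSpace ℂ X] [CompleteSpace X]
    (C : CorrStr 𝔄 X) where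
  ρ : A → Adj C.toHilbertModuleStr
  map_add : ∀ a b : A, ρ (a + b) = ρ a + ρ b
  map_smulC : ∀ (c : ℂ) (a : A), ρ (c • a) = c • ρ a
  map_mul : ∀ a b : A, ρ (a * b) = ρ a * ρ b
  map_star : ∀ a : A, ρ (star a) = star (ρ a)
  map_act : ∀ (a : A) (α : 𝔄), ρ (S.act a α) = C.ract (ρ a) α

variable (𝔄) in
/-- A bundled `𝔄`-correspondence. -/
structure BCorr where
  X : Type
  [iN : NormedAddCommGroup X]
  [iS : NormedSpace ℂ X]
  [iC : CompleteSpace X]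
  corr : CorrStr 𝔄 X

attribute [instance] BCorr.iN BCorr.iS BCorr.iC

section CCP

variable {X : Type} [NormedAddCommGroup X] [NormedSpace ℂ X] [CompleteSpace X]

/-- A contractive completely positive right `𝔄`-module map from the adjointable operators
of an `𝔄`-correspondence into a normed `*`-object `Z` with a right `𝔄`-action. -/
structure IsCCPModMap (C : CorrStr 𝔄 X) {Z : Type} [AddCommMonoid Z] [Mul Z] [Star Z]
    [Norm Z] [SMul ℂ Z] (actZ : Z → 𝔄 → Z) (φ : Adj C.toHilbertModuleStr → Z) : Prop where
  map_add : ∀ S T, φ (S + T) = φ S + φ T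
  map_smulC : ∀ (c : ℂ) (T), φ (c • T) = c • φ T
  cp : IsCPMap φ
  contractive : ∀ T, ‖φ T‖ ≤ ‖T‖
  map_ract : ∀ (T) (α : 𝔄), φ (C.ract T α) = actZ (φ T) α

end CCP

/-- An amenable `𝔄`-trace: for every faithful representation of `A` in an
`𝔄`-correspondence `Y`, the trace `τ` extends to a c.c.p. right module map
`φ : B(Y) → 𝔄` which is invariant under conjugation by unitaries in `A + ℂ I`. -/
def IsAmenableTrace {A : Type} [NonUnitalCStarAlgebra A] (S : CStarAction 𝔄 A)
    (τ : A → 𝔄) : Prop :=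
  IsATrace S τ ∧
    ∀ (Y : BCorr 𝔄) (π : RepC 𝔄 S Y.corr), Function.Injective π.ρ →
      ∃ φ : Adj Y.corr.toHilbertModuleStr → 𝔄,
        IsCCPModMap Y.corr (fun z α => z * α) φ ∧
        (∀ a : A, φ (π.ρ a) = τ a) ∧
        (∀ (a : A) (c : ℂ),
          (star (π.ρ a + c • 1) * (π.ρ a + c • 1) = 1 ∧
            (π.ρ a + c • 1) * star (π.ρ a + c • 1) = 1) →
          ∀ T, φ ((π.ρ a + c • 1) * T * star (π.ρ a + c • 1)) = φ T)

/-! ### A model of the GNS construction `L²(A, τ)` for an `𝔄`-trace -/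

variable {A : Type} [NonUnitalCStarAlgebra A]
variable {X : Type} [NormedAddCommGroup X] [NormedSpace ℂ X] [CompleteSpace X]

variable (𝔄 X) in
/-- A realization of the Hilbert `𝔄`-module `L²(A, τ)` together with the canonical map
`a ↦ â`, the left/right regular representations and the left `𝔄`-action. -/
structure GNSModel (S : CStarAction 𝔄 A) (τ : A → 𝔄) where
  toH : HilbertModuleStr 𝔄 X
  hat : A → X
  hat_add : ∀ a b : A, hat (a + b) = hat a + hat b
  hat_smulC : ∀ (c : ℂ) (a : A), hat (c • a) = c • hat a
  hat_act : ∀ (a : A) (α : 𝔄), hat (S.act a α) = toH.smul (hat a) α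
  inner_hat : ∀ a b : A, toH.inner (hat a) (hat b) = τ (star a * b)
  dense_hat : DenseRange hat
  lreg : A → Adj toH
  lreg_spec : ∀ a b : A, (lreg a).toFun (hat b) = hat (a * b)
  rreg : A → Adj toH
  rreg_spec : ∀ a b : A, (rreg a).toFun (hat b) = hat (b * a)
  lact : 𝔄 → X → X
  lact_hat : ∀ (α : 𝔄) (a : A), lact α (hat a) = hat (S.lact α a)
  lact_adj : ∀ (α : 𝔄) (x y : X), toH.inner (lact α x) y = toH.inner x (lact (star α) y)

variable (𝔄 X) in
/-- A `GNSModel` together with the canonical cyclic vector `1̂ = lim êᵢ`. -/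
structure GNSModelOne (S : CStarAction 𝔄 A) (τ : A → 𝔄) extends GNSModel 𝔄 X S τ where
  one : X
  lreg_one : ∀ a : A, (lreg a).toFun one = hat a
  rreg_one : ∀ a : A, (rreg a).toFun one = hat a

namespace GNSModel

variable {S : CStarAction 𝔄 A} {τ : A → 𝔄}

/-- The left `𝔄`-action of a GNS model as an adjointable operator. -/
def lactAdj (M : GNSModel 𝔄 X S τ) (α : 𝔄) : Adj M.toH :=
  { toFun := M.lact α
    adjFun := M.lact (star α)
    inner_adj := fun x y => M.lact_adj α x y }

/-- The right `𝔄`-module structure on `B(L²(A,τ))`. -/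
def ract (M : GNSModel 𝔄 X S τ) (T : Adj M.toH) (α : 𝔄) : Adj M.toH :=
  T * M.lactAdj α

end GNSModel

section AuxCS

variable {𝔄 : Type} [CStarAlgebra 𝔄]
variable {X : Type} [NormedAddCommGroup X] [NormedSpace ℂ X] [CompleteSpace X]


namespace HilbertModuleStr

variable (H : HilbertModuleStr 𝔄 X)

theorem cauchy_schwarz (x y : X) : ‖H.inner x y‖ ≤ ‖x‖ * ‖y‖ := by
  letI : PartialOrder 𝔄 := CStarAlgebra.spectralOrder 𝔄
  haveI : StarOrderedRing 𝔄 := CStarAlgebra.spectralOrderedRing 𝔄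
  have hpos : ∀ z : X, (0 : 𝔄) ≤ H.inner z z := fun z => by
    obtain ⟨b, hb⟩ := H.inner_pos z
    rw [hb]; exact star_mul_self_nonneg b
  by_cases hx : x = 0
  · subst hx
    rw [H.inner_zero_left]
    simp
  have hxn : 0 < ‖x‖ := norm_pos_iff.mpr hx
  set a := H.inner x y with ha
  have hrpos : (0:ℝ) < ‖x‖ ^ 2 := pow_pos hxn 2
  have i11 : H.inner (H.smul x a) (H.smul x a) = star a * (H.inner x x * a) := by
    rw [H.inner_smul_left, H.inner_smul_right]
  have i12 : H.inner (H.smul x a) (((‖x‖ ^ 2 : ℝ) : ℂ) • y) = ((‖x‖ ^ 2 : ℝ) : ℂ) • (star a * a) := by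
    rw [H.inner_smulC_right, H.inner_smul_left]
  have i21 : H.inner (((‖x‖ ^ 2 : ℝ) : ℂ) • y) (H.smul x a) = ((‖x‖ ^ 2 : ℝ) : ℂ) • (star a * a) := by
    rw [H.inner_smulC_left, H.inner_smul_right, Complex.conj_ofReal]
    congr 1
    rw [← H.inner_star x y]
  have i22 : H.inner (((‖x‖ ^ 2 : ℝ) : ℂ) • y) (((‖x‖ ^ 2 : ℝ) : ℂ) • y)
      = ((‖x‖ ^ 2 : ℝ) : ℂ) • (((‖x‖ ^ 2 : ℝ) : ℂ) • H.inner y y) := by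
    rw [H.inner_smulC_left, H.inner_smulC_right, Complex.conj_ofReal]
  have expand : H.inner (H.smul x a - ((‖x‖ ^ 2 : ℝ) : ℂ) • y) (H.smul x a - ((‖x‖ ^ 2 : ℝ) : ℂ) • y)
      = (star a * (H.inner x x * a) - (‖x‖ ^ 2 : ℝ) • (star a * a))
        - ((‖x‖ ^ 2 : ℝ) • (star a * a) - (‖x‖ ^ 2 : ℝ) • ((‖x‖ ^ 2 : ℝ) • H.inner y y)) := by
    have cast : ∀ u : 𝔄, ((‖x‖ ^ 2 : ℝ) : ℂ) • u = (‖x‖ ^ 2 : ℝ) • u := fun u =>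
      Complex.coe_smul _ u
    rw [H.inner_sub_left, H.inner_sub_right, H.inner_sub_right, i11, i12, i21, i22,
      cast, cast, cast]
  have hsa : IsSelfAdjoint (H.inner x x) := H.inner_star x x
  have hconj : star a * (H.inner x x * a) ≤ (‖x‖ ^ 2 : ℝ) • (star a * a) := by
    have h := CStarAlgebra.star_left_conjugate_le_norm_smul (a := a) (b := H.inner x x) hsa
    rw [mul_assoc] at h
    rwa [← H.norm_inner x] at h
  have key : (0 : 𝔄) ≤ H.inner (H.smul x a - ((‖x‖ ^ 2 : ℝ) : ℂ) • y) (H.smul x a - ((‖x‖ ^ 2 : ℝ) : ℂ) • y) :=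
    hpos _
  rw [expand] at key
  have hQ : (‖x‖ ^ 2 : ℝ) • (star a * a) - (‖x‖ ^ 2 : ℝ) • ((‖x‖ ^ 2 : ℝ) • H.inner y y)
      ≤ star a * (H.inner x x * a) - (‖x‖ ^ 2 : ℝ) • (star a * a) := sub_nonneg.mp key
  have hP : star a * (H.inner x x * a) - (‖x‖ ^ 2 : ℝ) • (star a * a) ≤ 0 := sub_nonpos.mpr hconj
  have h2 : (‖x‖ ^ 2 : ℝ) • (star a * a) ≤ (‖x‖ ^ 2 : ℝ) • ((‖x‖ ^ 2 : ℝ) • H.inner y y) := sub_nonpos.mp (hQ.trans hP)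
  have h3 : star a * a ≤ (‖x‖ ^ 2 : ℝ) • H.inner y y := by
    rwa [smul_le_smul_iff_of_pos_left hrpos] at h2
  have h4 : ‖star a * a‖ ≤ ‖(‖x‖ ^ 2 : ℝ) • H.inner y y‖ :=
    CStarAlgebra.norm_le_norm_of_nonneg_of_le (star_mul_self_nonneg a) h3
  have h5 : ‖a‖ * ‖a‖ ≤ ‖x‖ ^ 2 * ‖y‖ ^ 2 := by
    rw [← CStarRing.norm_star_mul_self]
    calc ‖star a * a‖ ≤ ‖(‖x‖ ^ 2 : ℝ) • H.inner y y‖ := h4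
      _ = |(‖x‖ ^ 2 : ℝ)| * ‖H.inner y y‖ := by rw [norm_smul, Real.norm_eq_abs]
      _ = ‖x‖ ^ 2 * ‖y‖ ^ 2 := by rw [abs_of_pos hrpos, H.norm_inner y]
  refine (pow_le_pow_iff_left₀ (norm_nonneg a) (mul_nonneg (norm_nonneg x) (norm_nonneg y))
    two_ne_zero).mp ?_
  rw [mul_pow, pow_two ‖a‖]
  exact h5

end HilbertModuleStr

end AuxCS

section AuxHM

variable {𝔄 : Type} [CStarAlgebra 𝔄]
variable {X : Type} [NormedAddCommGroup X] [NormedSpace ℂ X] [CompleteSpace X]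

namespace HilbertModuleStr

variable (H : HilbertModuleStr 𝔄 X)

theorem eq_zero_of_inner_self (x : X) (h : H.inner x x = 0) : x = 0 := by
  have h2 : ‖x‖ ^ 2 = 0 := by rw [H.norm_inner, h, norm_zero]
  have h3 : ‖x‖ = 0 := by
    have := sq_eq_zero_iff.mp h2
    exact this
  exact norm_eq_zero.mp h3

theorem eq_zero_of_forall_inner_left (w : X) (h : ∀ z : X, H.inner z w = 0) : w = 0 :=
  H.eq_zero_of_inner_self w (h w)

theorem eq_zero_of_forall_inner_right (w : X) (h : ∀ z : X, H.inner w z = 0) : w = 0 :=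
  H.eq_zero_of_inner_self w (h w)

theorem continuous_inner_left (y : X) : Continuous fun x : X => H.inner x y := by
  refine (LipschitzWith.of_dist_le_mul (K := ‖y‖.toNNReal) fun p q => ?_).continuous
  rw [dist_eq_norm, dist_eq_norm, ← H.inner_sub_left]
  calc ‖H.inner (p - q) y‖ ≤ ‖p - q‖ * ‖y‖ := H.cauchy_schwarz _ _
    _ = (‖y‖.toNNReal : ℝ) * ‖p - q‖ := by
        rw [Real.coe_toNNReal _ (norm_nonneg y), mul_comm]

theorem continuous_inner_right (x : X) : Continuous fun y : X => H.inner x y := by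
  refine (LipschitzWith.of_dist_le_mul (K := ‖x‖.toNNReal) fun p q => ?_).continuous
  rw [dist_eq_norm, dist_eq_norm, ← H.inner_sub_right]
  calc ‖H.inner x (p - q)‖ ≤ ‖x‖ * ‖p - q‖ := H.cauchy_schwarz _ _
    _ = (‖x‖.toNNReal : ℝ) * ‖p - q‖ := by rw [Real.coe_toNNReal _ (norm_nonneg x)]

end HilbertModuleStr

namespace Adj

variable {H : HilbertModuleStr 𝔄 X}

theorem inner_adj' (t : Adj H) (x y : X) : H.inner (t.adjFun x) y = H.inner x (t.toFun y) :=
  (star t).inner_adj x y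

theorem map_add' (t : Adj H) (x y : X) : t.toFun (x + y) = t.toFun x + t.toFun y := by
  have h : ∀ z, H.inner (t.toFun (x + y) - (t.toFun x + t.toFun y)) z = 0 := by
    intro z
    rw [H.inner_sub_left, H.inner_add_left, t.inner_adj, t.inner_adj, t.inner_adj,
      ← H.inner_add_left]
    exact sub_self _
  have := H.eq_zero_of_forall_inner_right _ h
  exact sub_eq_zero.mp this

theorem map_smul' (t : Adj H) (c : ℂ) (x : X) : t.toFun (c • x) = c • t.toFun x := by
  have h : ∀ z, H.inner (t.toFun (c • x) - c • t.toFun x) z = 0 := by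
    intro z
    rw [H.inner_sub_left, t.inner_adj, H.inner_smulC_left, H.inner_smulC_left, t.inner_adj]
    exact sub_self _
  have := H.eq_zero_of_forall_inner_right _ h
  exact sub_eq_zero.mp this

/-- The linear map underlying an adjointable operator. -/
def toLin (t : Adj H) : X →ₗ[ℂ] X :=
  { toFun := t.toFun, map_add' := t.map_add', map_smul' := t.map_smul' }

theorem continuous_toFun (t : Adj H) : Continuous t.toFun := by
  have : Continuous t.toLin := by
    refine t.toLin.continuous_of_seq_closed_graph fun u x y hu hy => ?_
    have h : ∀ z, H.inner (y - t.toFun x) z = 0 := by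
      intro z
      have c1 : Filter.Tendsto (fun n => H.inner (t.toFun (u n)) z) Filter.atTop
          (nhds (H.inner y z)) := ((H.continuous_inner_left z).tendsto _).comp hy
      have c2 : Filter.Tendsto (fun n => H.inner (t.toFun (u n)) z) Filter.atTop
          (nhds (H.inner x (t.adjFun z))) := by
        simp only [t.inner_adj]
        exact ((H.continuous_inner_left (t.adjFun z)).tendsto _).comp hu
      have := tendsto_nhds_unique c1 c2
      rw [H.inner_sub_left, this, t.inner_adj]
      exact sub_self _
    have := H.eq_zero_of_forall_inner_right _ h
    exact sub_eq_zero.mp this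
  exact this

theorem star_mul' (t u : Adj H) : star (t * u) = star u * star t :=
  Adj.ext' rfl rfl

end Adj

end AuxHM

section AuxGNS

variable {𝔄 A : Type} [CStarAlgebra 𝔄] [NonUnitalCStarAlgebra A]
variable {X : Type} [NormedAddCommGroup X] [NormedSpace ℂ X] [CompleteSpace X]
variable {S : CStarAction 𝔄 A} {τ : A → 𝔄}

theorem aux_hat_orth (M : GNSModel 𝔄 X S τ) (w : X)
    (h : ∀ b : A, M.toH.inner (M.hat b) w = 0) : w = 0 := by
  have h1 : (fun x : X => M.toH.inner x w) = fun _ => (0 : 𝔄) :=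
    M.dense_hat.equalizer (M.toH.continuous_inner_left w) continuous_const
      (funext fun b => h b)
  exact M.toH.eq_zero_of_forall_inner_left w fun z => congrFun h1 z

theorem aux_ext_adj (M : GNSModel 𝔄 X S τ) {t u : Adj M.toH}
    (h : ∀ a : A, t.toFun (M.hat a) = u.toFun (M.hat a)) : t = u := by
  have h1 : t.toFun = u.toFun :=
    M.dense_hat.equalizer t.continuous_toFun u.continuous_toFun (funext h)
  refine Adj.ext' h1 (funext fun y => ?_)
  have h2 : ∀ x : X, M.toH.inner x (t.adjFun y - u.adjFun y) = 0 := fun x => by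
    rw [M.toH.inner_sub_right, ← t.inner_adj, ← u.inner_adj, h1]
    exact sub_self _
  exact sub_eq_zero.mp (M.toH.eq_zero_of_inner_self _ (h2 _))

theorem aux_star_lreg (M : GNSModel 𝔄 X S τ) (a : A) :
    star (M.lreg a) = M.lreg (star a) := by
  refine aux_ext_adj M fun b => ?_
  show (M.lreg a).adjFun (M.hat b) = (M.lreg (star a)).toFun (M.hat b)
  rw [M.lreg_spec]
  refine sub_eq_zero.mp (aux_hat_orth M _ fun c => ?_)
  rw [M.toH.inner_sub_right, ← (M.lreg a).inner_adj, M.lreg_spec, M.inner_hat, M.inner_hat,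
    star_mul, mul_assoc]
  exact sub_self _

theorem aux_star_rreg (M : GNSModel 𝔄 X S τ) (hτ : IsATrace S τ) (a : A) :
    star (M.rreg a) = M.rreg (star a) := by
  refine aux_ext_adj M fun b => ?_
  show (M.rreg a).adjFun (M.hat b) = (M.rreg (star a)).toFun (M.hat b)
  rw [M.rreg_spec]
  refine sub_eq_zero.mp (aux_hat_orth M _ fun c => ?_)
  rw [M.toH.inner_sub_right, ← (M.rreg a).inner_adj, M.rreg_spec, M.inner_hat, M.inner_hat,
    star_mul, mul_assoc, hτ.tracial (star a)]
  rw [mul_assoc (star c) b (star a)]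
  exact sub_self _

theorem aux_lreg_rreg_comm (M : GNSModel 𝔄 X S τ) (a b : A) :
    M.lreg a * M.rreg b = M.rreg b * M.lreg a := by
  refine aux_ext_adj M fun c => ?_
  show (M.lreg a).toFun ((M.rreg b).toFun (M.hat c)) =
    (M.rreg b).toFun ((M.lreg a).toFun (M.hat c))
  rw [M.rreg_spec, M.lreg_spec, M.lreg_spec, M.rreg_spec, mul_assoc]

theorem aux_j_vec (M : GNSModel 𝔄 X S τ) (hτ : IsATrace S τ) {J : X → X} (hJc : Continuous J)
    (hJhat : ∀ a : A, J (M.hat a) = M.hat (star a)) (a : A) (w : X) :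
    M.toH.inner (M.hat a) (J w) = M.toH.inner w (M.hat (star a)) := by
  have h : (fun w : X => M.toH.inner (M.hat a) (J w))
      = fun w : X => M.toH.inner w (M.hat (star a)) := by
    refine M.dense_hat.equalizer ((M.toH.continuous_inner_right _).comp hJc)
      (M.toH.continuous_inner_left _) (funext fun c => ?_)
    show M.toH.inner (M.hat a) (J (M.hat c)) = M.toH.inner (M.hat c) (M.hat (star a))
    rw [hJhat, M.inner_hat, M.inner_hat, hτ.tracial (star a)]
  exact congrFun h w

end AuxGNS

section AuxGNSOne

variable {𝔄 A : Type} [CStarAlgebra 𝔄] [NonUnitalCStarAlgebra A]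
variable {X : Type} [NormedAddCommGroup X] [NormedSpace ℂ X] [CompleteSpace X]
variable {S : CStarAction 𝔄 A} {τ : A → 𝔄}
variable (M : GNSModelOne 𝔄 X S τ)

theorem aux_comm_star_l {t : Adj M.toH} (ht : t ∈ Commutant (Set.range M.lreg)) :
    star t ∈ Commutant (Set.range M.lreg) := by
  rintro U ⟨a, rfl⟩
  have h := congrArg star (ht (M.lreg (star a)) ⟨star a, rfl⟩)
  rw [Adj.star_mul', Adj.star_mul', aux_star_lreg, star_star] at h
  exact h.symm

theorem aux_comm_star_r (hτ : IsATrace S τ) {t : Adj M.toH}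
    (ht : t ∈ Commutant (Set.range M.rreg)) :
    star t ∈ Commutant (Set.range M.rreg) := by
  rintro U ⟨a, rfl⟩
  have h := congrArg star (ht (M.rreg (star a)) ⟨star a, rfl⟩)
  rw [Adj.star_mul', Adj.star_mul', aux_star_rreg _ hτ, star_star] at h
  exact h.symm

theorem aux_t_hat_l {t : Adj M.toH} (ht : t ∈ Commutant (Set.range M.lreg)) (a : A) :
    t.toFun (M.hat a) = (M.lreg a).toFun (t.toFun M.one) := by
  have h := ht (M.lreg a) ⟨a, rfl⟩
  calc t.toFun (M.hat a) = t.toFun ((M.lreg a).toFun M.one) := by rw [M.lreg_one]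
    _ = (t * M.lreg a).toFun M.one := rfl
    _ = (M.lreg a * t).toFun M.one := by rw [h]
    _ = (M.lreg a).toFun (t.toFun M.one) := rfl

theorem aux_t_hat_r {s : Adj M.toH} (hs : s ∈ Commutant (Set.range M.rreg)) (a : A) :
    s.toFun (M.hat a) = (M.rreg a).toFun (s.toFun M.one) := by
  have h := hs (M.rreg a) ⟨a, rfl⟩
  calc s.toFun (M.hat a) = s.toFun ((M.rreg a).toFun M.one) := by rw [M.rreg_one]
    _ = (s * M.rreg a).toFun M.one := rfl
    _ = (M.rreg a * s).toFun M.one := by rw [h]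
    _ = (M.rreg a).toFun (s.toFun M.one) := rfl

theorem aux_lreg_adj_one (a : A) : (M.lreg a).adjFun M.one = M.hat (star a) := by
  have h := congrArg Adj.toFun (aux_star_lreg M.toGNSModel a)
  calc (M.lreg a).adjFun M.one = (M.lreg (star a)).toFun M.one := congrFun h M.one
    _ = M.hat (star a) := M.lreg_one (star a)

theorem aux_rreg_adj_one (hτ : IsATrace S τ) (a : A) :
    (M.rreg a).adjFun M.one = M.hat (star a) := by
  have h := congrArg Adj.toFun (aux_star_rreg M.toGNSModel hτ a)
  calc (M.rreg a).adjFun M.one = (M.rreg (star a)).toFun M.one := congrFun h M.one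
    _ = M.hat (star a) := M.rreg_one (star a)

variable (hτ : IsATrace S τ) {J : X → X} (hJc : Continuous J)
  (hJhat : ∀ a : A, J (M.hat a) = M.hat (star a))

include hτ hJc hJhat

theorem aux_adj_one_l {t : Adj M.toH} (ht : t ∈ Commutant (Set.range M.lreg)) :
    J (t.toFun M.one) = t.adjFun M.one := by
  refine sub_eq_zero.mp (aux_hat_orth M.toGNSModel _ fun a => ?_)
  rw [M.toH.inner_sub_right, aux_j_vec M.toGNSModel hτ hJc hJhat]
  have h1 : M.toH.inner (M.hat a) (t.adjFun M.one)
      = M.toH.inner (t.toFun M.one) (M.hat (star a)) := by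
    rw [← t.inner_adj, aux_t_hat_l M ht, (M.lreg a).inner_adj, aux_lreg_adj_one]
  rw [h1]
  exact sub_self _

theorem aux_adj_one_r {s : Adj M.toH} (hs : s ∈ Commutant (Set.range M.rreg)) :
    J (s.toFun M.one) = s.adjFun M.one := by
  refine sub_eq_zero.mp (aux_hat_orth M.toGNSModel _ fun a => ?_)
  rw [M.toH.inner_sub_right, aux_j_vec M.toGNSModel hτ hJc hJhat]
  have h1 : M.toH.inner (M.hat a) (s.adjFun M.one)
      = M.toH.inner (s.toFun M.one) (M.hat (star a)) := by
    rw [← s.inner_adj, aux_t_hat_r M hs, (M.rreg a).inner_adj, aux_rreg_adj_one M hτ]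
  rw [h1]
  exact sub_self _

theorem aux_key2 (a b : A) (u v : X) :
    M.toH.inner ((M.lreg b).toFun (J u)) ((M.rreg a).toFun v)
      = M.toH.inner ((M.rreg b).toFun (J v)) ((M.lreg a).toFun u) := by
  have step1 : ∀ (c : A) (v : X),
      M.toH.inner ((M.lreg b).toFun (J (M.hat c))) ((M.rreg a).toFun v)
        = M.toH.inner ((M.rreg b).toFun (J v)) ((M.lreg a).toFun (M.hat c)) := by
    intro c
    have h : (fun v : X => M.toH.inner ((M.lreg b).toFun (J (M.hat c))) ((M.rreg a).toFun v))
        = fun v : X => M.toH.inner ((M.rreg b).toFun (J v)) ((M.lreg a).toFun (M.hat c)) := by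
      refine M.dense_hat.equalizer
        ((M.toH.continuous_inner_right _).comp (M.rreg a).continuous_toFun)
        ((M.toH.continuous_inner_left _).comp ((M.rreg b).continuous_toFun.comp hJc))
        (funext fun d => ?_)
      show M.toH.inner ((M.lreg b).toFun (J (M.hat c))) ((M.rreg a).toFun (M.hat d))
        = M.toH.inner ((M.rreg b).toFun (J (M.hat d))) ((M.lreg a).toFun (M.hat c))
      rw [hJhat, hJhat, M.lreg_spec, M.rreg_spec, M.rreg_spec, M.lreg_spec,
        M.inner_hat, M.inner_hat, star_mul, star_star, star_mul, star_star,
        mul_assoc c (star b) (d * a), hτ.tracial c]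
      simp [mul_assoc]
    exact fun v => congrFun h v
  have h : (fun u : X => M.toH.inner ((M.lreg b).toFun (J u)) ((M.rreg a).toFun v))
      = fun u : X => M.toH.inner ((M.rreg b).toFun (J v)) ((M.lreg a).toFun u) := by
    refine M.dense_hat.equalizer
      ((M.toH.continuous_inner_left _).comp ((M.lreg b).continuous_toFun.comp hJc))
      ((M.toH.continuous_inner_right _).comp (M.lreg a).continuous_toFun)
      (funext fun c => step1 c v)
  exact congrFun h u

theorem aux_lemma_A {t s : Adj M.toH} (ht : t ∈ Commutant (Set.range M.lreg))
    (hs : s ∈ Commutant (Set.range M.rreg)) : t * s = s * t := by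
  refine aux_ext_adj M.toGNSModel fun a => ?_
  refine sub_eq_zero.mp (aux_hat_orth M.toGNSModel _ fun b => ?_)
  rw [M.toH.inner_sub_right]
  have l1 : M.toH.inner (M.hat b) ((t * s).toFun (M.hat a))
      = M.toH.inner ((M.lreg b).toFun (J (t.toFun M.one))) ((M.rreg a).toFun (s.toFun M.one)) := by
    show M.toH.inner (M.hat b) (t.toFun (s.toFun (M.hat a))) = _
    rw [← Adj.inner_adj' t]
    have e1 : t.adjFun (M.hat b) = (M.lreg b).toFun (J (t.toFun M.one)) := by
      have h2 : (star t).toFun (M.hat b) = (M.lreg b).toFun ((star t).toFun M.one) :=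
        aux_t_hat_l M (aux_comm_star_l M ht) b
      rw [aux_adj_one_l M hτ hJc hJhat ht]
      exact h2
    rw [e1, aux_t_hat_r M hs]
  have l2 : M.toH.inner (M.hat b) ((s * t).toFun (M.hat a))
      = M.toH.inner ((M.rreg b).toFun (J (s.toFun M.one))) ((M.lreg a).toFun (t.toFun M.one)) := by
    show M.toH.inner (M.hat b) (s.toFun (t.toFun (M.hat a))) = _
    rw [← Adj.inner_adj' s]
    have e1 : s.adjFun (M.hat b) = (M.rreg b).toFun (J (s.toFun M.one)) := by
      have h2 : (star s).toFun (M.hat b) = (M.rreg b).toFun ((star s).toFun M.one) :=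
        aux_t_hat_r M (aux_comm_star_r M hτ hs) b
      rw [aux_adj_one_r M hτ hJc hJhat hs]
      exact h2
    rw [e1, aux_t_hat_l M ht]
  rw [l1, l2, aux_key2 M hτ hJc hJhat]
  exact sub_self _

end AuxGNSOne
/-- Let `τ : A → 𝔄` be an `𝔄`-trace with `𝔄` unital, and let `J` be the
canonical conjugation on `L²(A,τ)` (the continuous extension of `â ↦ (a*)^`).  Then
(iii) `J t 1̂ = t* 1̂` for every `t ∈ π_τ(A)'`, and (iv) `π_τ(A)'' = π_τ^op(A^op)'` and
`π_τ(A)' = π_τ^op(A^op)''` in `B(L²(A,τ))`. -/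
theorem trace_conjugation_commutant_unital
    {𝔄 A : Type} [CStarAlgebra 𝔄] [NonUnitalCStarAlgebra A]
    {X : Type} [NormedAddCommGroup X] [NormedSpace ℂ X] [CompleteSpace X]
    (S : CStarAction 𝔄 A) (τ : A → 𝔄) (hτ : IsATrace S τ)
    (M : GNSModelOne 𝔄 X S τ)
    (J : X → X) (hJc : Continuous J)
    (hJhat : ∀ a : A, J (M.hat a) = M.hat (star a)) :
    (∀ t : Adj M.toH, t ∈ Commutant (Set.range M.lreg) →
      J (t.toFun M.one) = (star t).toFun M.one) ∧
    Commutant (Commutant (Set.range M.lreg)) = Commutant (Set.range M.rreg) ∧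
    Commutant (Set.range M.lreg) = Commutant (Commutant (Set.range M.rreg)) := by
  refine ⟨fun t ht => aux_adj_one_l M hτ hJc hJhat ht, ?_, ?_⟩
  · refine Set.Subset.antisymm (fun u hu U hU => ?_) (fun u hu t ht => ?_)
    · obtain ⟨b, rfl⟩ := hU
      refine hu _ fun V hV => ?_
      obtain ⟨a, rfl⟩ := hV
      exact (aux_lreg_rreg_comm M.toGNSModel a b).symm
    · exact (aux_lemma_A M hτ hJc hJhat ht hu).symm
  · refine Set.Subset.antisymm (fun t ht s hs => ?_) (fun t ht U hU => ?_)
    · exact aux_lemma_A M hτ hJc hJhat ht hs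
    · obtain ⟨a, rfl⟩ := hU
      refine ht _ fun V hV => ?_
      obtain ⟨b, rfl⟩ := hV
      exact aux_lreg_rreg_comm M.toGNSModel a b
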